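/- Assume α_i ∈ (0,1], ω_i + δ'_i > 0, and δ_i ≤ δ'_i for every i; let q ∈ (0,1]ⁿ satisfy δ_i ≤ δ'_i + (1 − 1/q_i)·ω_i for every i; fix nonnegative initial vectors x(0), y(0) ∈ ℝⁿ; and let P ⊆ {1,…,n}×{1,…,n} satisfy ρ(M_{−P}(q)) < 1 and ρ(N_{−P}) < 1. Then the lower bound does not exceed the upper bound: σ^L(P) = 1ᵀ·A^{−1}·(D·(I − N_{−P})^{−1} − I)·(x(0) + W·(W + D')^{−1}·y(0)) ≤ 1ᵀ·(A + Q(I − A))^{−1}·(D·(I − M_{−P}(q))^{−1} − I)·(x(0) + Q·y(0)) = σ^U(P). (The chain inequality σ^L(P) ≤ σ(P) ≤ σ^U(P) stated in Section IV, restricted to its two closed-form endpoints.) -/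

import Mathlib

open Matrix Filter Finset

/-- Spectral radius of a real square matrix: the maximum modulus of its complex
eigenvalues (elements of the spectrum of the matrix viewed over `ℂ`). -/
noncomputable def specRad {n : ℕ} (M : Matrix (Fin n) (Fin n) ℝ) : ℝ :=
  sSup {r : ℝ | ∃ μ : ℂ, μ ∈ spectrum ℂ (M.map (Complex.ofReal)) ∧ r = ‖μ‖}

/-- The matrix `B` with the entries indexed by the edge set `P` deleted (set to `0`). -/
def Bdel {n : ℕ} (B : Matrix (Fin n) (Fin n) ℝ) (P : Finset (Fin n × Fin n)) :
    Matrix (Fin n) (Fin n) ℝ :=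
  Matrix.of fun i j => if (i, j) ∈ P then 0 else B i j

/-- The lower-bound set function
`σᴸ(P) = 1ᵀ·A⁻¹·(D·(I − N₋ₚ)⁻¹ − I)·(x0 + W·(W + D')⁻¹·y0)`. -/
noncomputable def sigmaL {n : ℕ} (α ω δ δ' s x0 y0 : Fin n → ℝ)
    (B : Matrix (Fin n) (Fin n) ℝ) (P : Finset (Fin n × Fin n)) : ℝ :=
  (fun _ => (1 : ℝ)) ⬝ᵥ
    ((Matrix.diagonal α)⁻¹ *
      (Matrix.diagonal δ *
        (1 - (1 - Matrix.diagonal δ +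
          Matrix.diagonal α * Matrix.diagonal s * Bdel B P))⁻¹ - 1)) *ᵥ
      (x0 + (Matrix.diagonal ω * (Matrix.diagonal ω + Matrix.diagonal δ')⁻¹) *ᵥ y0)

/-- The upper-bound set function
`σᵁ(P) = 1ᵀ·(A + Q(I − A))⁻¹·(D·(I − M₋ₚ(q))⁻¹ − I)·(x0 + Q·y0)`. -/
noncomputable def sigmaU {n : ℕ} (α ω δ δ' s q x0 y0 : Fin n → ℝ)
    (B : Matrix (Fin n) (Fin n) ℝ) (P : Finset (Fin n × Fin n)) : ℝ :=
  (fun _ => (1 : ℝ)) ⬝ᵥ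
    ((Matrix.diagonal α + Matrix.diagonal q * (1 - Matrix.diagonal α))⁻¹ *
      (Matrix.diagonal δ *
        (1 - (1 - Matrix.diagonal (fun i => min (δ i) (δ' i + (1 - 1 / q i) * ω i)) +
          (Matrix.diagonal α + Matrix.diagonal q * (1 - Matrix.diagonal α)) *
            Matrix.diagonal s * Bdel B P))⁻¹ - 1)) *ᵥ
      (x0 + Matrix.diagonal q *ᵥ y0)

section Aux

open scoped ENNReal NNReal

attribute [local instance] Matrix.linftyOpNormedRing Matrix.linftyOpNormedAlgebra

private lemma specRadius_lt {n : ℕ} (hn : 1 ≤ n) (M : Matrix (Fin n) (Fin n) ℝ)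
    (h : specRad M < 1) :
    spectralRadius ℂ (M.map (Complex.ofReal)) < 1 := by
  haveI : Nonempty (Fin n) := ⟨⟨0, hn⟩⟩
  have hfin : (spectrum ℂ (M.map (Complex.ofReal))).Finite := Matrix.finite_spectrum _
  have key : ∀ z ∈ spectrum ℂ (M.map (Complex.ofReal)), ‖z‖₊ < (1 : NNReal) := by
    intro z hz
    have hmem : ‖z‖ ∈
        {r : ℝ | ∃ μ : ℂ, μ ∈ spectrum ℂ (M.map (Complex.ofReal)) ∧ r = ‖μ‖} :=
      ⟨z, hz, rfl⟩
    have hbdd : BddAbove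
        {r : ℝ | ∃ μ : ℂ, μ ∈ spectrum ℂ (M.map (Complex.ofReal)) ∧ r = ‖μ‖} := by
      have : {r : ℝ | ∃ μ : ℂ, μ ∈ spectrum ℂ (M.map (Complex.ofReal)) ∧ r = ‖μ‖}
          = (fun μ => ‖μ‖) '' (spectrum ℂ (M.map (Complex.ofReal))) := by
        ext r; simp [Set.mem_image, eq_comm]
      rw [this]
      exact (hfin.image _).bddAbove
    have h1 : ‖z‖ < 1 := lt_of_le_of_lt (le_csSup hbdd hmem) h
    rw [← NNReal.coe_lt_coe]
    simpa using h1
  have := spectrum.spectralRadius_lt_of_forall_lt (M.map (Complex.ofReal)) key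
  simpa using this

private lemma entry_nnnorm_le {n : ℕ} (A : Matrix (Fin n) (Fin n) ℂ) (i j : Fin n) :
    ‖A i j‖₊ ≤ ‖A‖₊ := by
  rw [Matrix.linfty_opNNNorm_def]
  exact le_trans (Finset.single_le_sum (f := fun l => ‖A i l‖₊) (fun _ _ => zero_le)
    (Finset.mem_univ j)) (Finset.le_sup (f := fun i => ∑ j, ‖A i j‖₊) (Finset.mem_univ i))

private lemma entry_summable {n : ℕ} (hn : 1 ≤ n) (M : Matrix (Fin n) (Fin n) ℝ)
    (h : specRad M < 1) :
    ∀ i j, Summable fun k : ℕ => (M ^ k) i j := by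
  have h' := specRadius_lt hn M h
  set Mc := M.map (Complex.ofReal) with hMc
  obtain ⟨r, hr1, hr2⟩ := ENNReal.lt_iff_exists_nnreal_btwn.mp h'
  have hrlt : (r : ℝ) < 1 := by exact_mod_cast hr2
  have htd := spectrum.pow_nnnorm_pow_one_div_tendsto_nhds_spectralRadius Mc
  have hev : ∀ᶠ k : ℕ in atTop, ((‖Mc ^ k‖₊ : ℝ≥0∞) ^ (1 / (k:ℝ))) < (r : ℝ≥0∞) :=
    htd.eventually_lt_const hr1
  have hbound : ∀ᶠ k : ℕ in atTop, ‖Mc ^ k‖₊ ≤ r ^ k := by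
    filter_upwards [hev, eventually_ge_atTop 1] with k hk hk1
    have hkne : (k:ℝ) ≠ 0 := by positivity
    have h2 := ENNReal.rpow_lt_rpow hk (show (0:ℝ) < k by positivity)
    rw [← ENNReal.rpow_mul, one_div, inv_mul_cancel₀ hkne, ENNReal.rpow_one,
      ENNReal.rpow_natCast] at h2
    have := h2.le
    rw [← ENNReal.coe_pow, ENNReal.coe_le_coe] at this
    exact this
  intro i j
  have hgeo : Summable fun k : ℕ => (r : ℝ) ^ k :=
    summable_geometric_of_lt_one r.coe_nonneg hrlt
  apply Summable.of_norm_bounded_eventually_nat hgeo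
  filter_upwards [hbound] with k hk
  have h1 : ‖(M ^ k) i j‖₊ = ‖(Mc ^ k) i j‖₊ := by
    have he : (Mc ^ k) i j = Complex.ofReal ((M ^ k) i j) := by
      rw [hMc]
      have : M.map (Complex.ofReal) = Complex.ofRealHom.mapMatrix M := rfl
      rw [this, ← map_pow]
      rfl
    rw [he]
    exact (Complex.nnnorm_real _).symm
  calc ‖(M ^ k) i j‖ = (‖(Mc ^ k) i j‖₊ : ℝ) := by rw [← h1]; rfl
    _ ≤ (‖Mc ^ k‖₊ : ℝ) := by exact_mod_cast entry_nnnorm_le _ i j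
    _ ≤ ((r ^ k : ℝ≥0) : ℝ) := by exact_mod_cast hk
    _ = (r:ℝ) ^ k := by push_cast; ring

end Aux

set_option maxHeartbeats 1000000 in
private lemma neumann_inv {n : ℕ} (M : Matrix (Fin n) (Fin n) ℝ)
    (hsum : ∀ i j, Summable fun k : ℕ => (M ^ k) i j) :
    (1 - M) * (Matrix.of fun i j => ∑' k : ℕ, (M ^ k) i j) = 1 ∧
    (1 - M)⁻¹ = Matrix.of fun i j => ∑' k : ℕ, (M ^ k) i j := by
  set T : Matrix (Fin n) (Fin n) ℝ := Matrix.of fun i j => ∑' k : ℕ, (M ^ k) i j with hT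
  have key : ∀ i j, ((1 - M) * T) i j = (1 : Matrix (Fin n) (Fin n) ℝ) i j := by
    intro i j
    rw [Matrix.mul_apply]
    have step1 : ∀ l, (1 - M) i l * T l j = ∑' k : ℕ, (1 - M) i l * (M ^ k) l j := by
      intro l; rw [hT]; exact (tsum_mul_left).symm
    simp_rw [step1]
    rw [← Summable.tsum_finsetSum (fun l _ => ((hsum l j).mul_left _))]
    have step2 : ∀ k : ℕ, (∑ l, (1 - M) i l * (M ^ k) l j) = (M ^ k) i j - (M ^ (k+1)) i j := by
      intro k
      have h3 : (∑ l, (1 - M) i l * (M ^ k) l j) = ((1 - M) * M ^ k) i j := (Matrix.mul_apply).symm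
      rw [h3, one_sub_mul, ← pow_succ']
      simp [Matrix.sub_apply]
    simp_rw [step2]
    have hs1 := hsum i j
    have hs2 : Summable fun k : ℕ => (M ^ (k+1)) i j :=
      (summable_nat_add_iff (f := fun k : ℕ => (M ^ k) i j) 1).mpr hs1
    rw [Summable.tsum_sub hs1 hs2, Summable.tsum_eq_zero_add hs1]
    simp [Matrix.one_apply, pow_zero]
  have hright : (1 - M) * T = 1 := by ext i j; exact key i j
  exact ⟨hright, Matrix.inv_eq_right_inv hright⟩

private lemma pow_entry_nonneg {n : ℕ} (X : Matrix (Fin n) (Fin n) ℝ)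
    (h : ∀ i j, 0 ≤ X i j) : ∀ k i j, 0 ≤ (X ^ k) i j := by
  intro k
  induction k with
  | zero => intro i j; rw [pow_zero, Matrix.one_apply]; positivity
  | succ k ih =>
    intro i j
    rw [pow_succ, Matrix.mul_apply]
    exact Finset.sum_nonneg fun l _ => mul_nonneg (ih i l) (h l j)

private lemma pow_entry_mono {n : ℕ} (N M : Matrix (Fin n) (Fin n) ℝ)
    (h0 : ∀ i j, 0 ≤ N i j) (hle : ∀ i j, N i j ≤ M i j) :
    ∀ k i j, (N ^ k) i j ≤ (M ^ k) i j := by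
  intro k
  induction k with
  | zero => intro i j; rw [pow_zero, pow_zero]
  | succ k ih =>
    intro i j
    rw [pow_succ, pow_succ, Matrix.mul_apply, Matrix.mul_apply]
    refine Finset.sum_le_sum fun l _ => ?_
    have h0M : 0 ≤ (M ^ k) i l :=
      le_trans (pow_entry_nonneg N h0 k i l) (ih i l)
    exact mul_le_mul (ih i l) (hle l j) (h0 l j) h0M

private lemma inv_entry_le {n : ℕ} (hn : 1 ≤ n) (N M : Matrix (Fin n) (Fin n) ℝ)
    (h0 : ∀ i j, 0 ≤ N i j) (hle : ∀ i j, N i j ≤ M i j)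
    (hρN : specRad N < 1) (hρM : specRad M < 1) :
    ∀ i j, 0 ≤ (1 - N)⁻¹ i j ∧ (1 - N)⁻¹ i j ≤ (1 - M)⁻¹ i j := by
  have hsN := entry_summable hn N hρN
  have hsM := entry_summable hn M hρM
  obtain ⟨-, hN⟩ := neumann_inv N hsN
  obtain ⟨-, hM⟩ := neumann_inv M hsM
  intro i j
  rw [hN, hM]
  simp only [Matrix.of_apply]
  refine ⟨tsum_nonneg fun k => pow_entry_nonneg N h0 k i j, ?_⟩
  exact Summable.tsum_le_tsum (fun k => pow_entry_mono N M h0 hle k i j) (hsN i j) (hsM i j)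

private lemma diag_inv_cancel {n : ℕ} (v : Fin n → ℝ) (hv : ∀ i, v i ≠ 0) :
    (Matrix.diagonal v)⁻¹ = Matrix.diagonal (fun i => (v i)⁻¹) := by
  apply Matrix.inv_eq_right_inv
  rw [Matrix.diagonal_mul_diagonal]
  have h1 : (fun i => v i * (v i)⁻¹) = fun _ => (1:ℝ) := funext fun i => mul_inv_cancel₀ (hv i)
  rw [h1, Matrix.diagonal_one]

set_option maxHeartbeats 1000000 in
/-- The lower bound does not exceed the upper bound: `σᴸ(P) ≤ σᵁ(P)`
(the two closed-form endpoints of the Sandwich chain `σᴸ ≤ σ ≤ σᵁ`). -/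
theorem sigmaL_le_sigmaU
    (n : ℕ) (hn : 1 ≤ n) (α ω δ δ' s : Fin n → ℝ)
    (hα : ∀ i, 0 < α i ∧ α i ≤ 1) (hω : ∀ i, 0 ≤ ω i ∧ ω i ≤ 1)
    (hδ : ∀ i, 0 ≤ δ i ∧ δ i ≤ 1) (hδ' : ∀ i, 0 ≤ δ' i ∧ δ' i ≤ 1)
    (hs : ∀ i, 0 ≤ s i ∧ s i ≤ 1) (hωδ' : ∀ i, ω i + δ' i ≤ 1)
    (hωδ'pos : ∀ i, 0 < ω i + δ' i) (hass1 : ∀ i, δ i ≤ δ' i)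
    (B : Matrix (Fin n) (Fin n) ℝ) (hB : ∀ i j, 0 ≤ B i j)
    (q : Fin n → ℝ) (hq : ∀ i, 0 < q i ∧ q i ≤ 1)
    (hqδ : ∀ i, δ i ≤ δ' i + (1 - 1 / q i) * ω i)
    (x0 y0 : Fin n → ℝ) (hx0 : ∀ i, 0 ≤ x0 i) (hy0 : ∀ i, 0 ≤ y0 i)
    (P : Finset (Fin n × Fin n))
    (hρM : specRad
      (1 - Matrix.diagonal (fun i => min (δ i) (δ' i + (1 - 1 / q i) * ω i)) +
        (Matrix.diagonal α + Matrix.diagonal q * (1 - Matrix.diagonal α)) *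
          Matrix.diagonal s * Bdel B P) < 1)
    (hρN : specRad
      (1 - Matrix.diagonal δ + Matrix.diagonal α * Matrix.diagonal s * Bdel B P) < 1) :
    sigmaL α ω δ δ' s x0 y0 B P ≤ sigmaU α ω δ δ' s q x0 y0 B P := by
  -- some notation
  set Bp := Bdel B P with hBpdef
  have hBp : ∀ i j, 0 ≤ Bp i j := by
    intro i j
    show (0:ℝ) ≤ if (i, j) ∈ P then 0 else B i j
    split
    · exact le_rfl
    · exact hB i j
  set g : Fin n → ℝ := fun i => α i + q i * (1 - α i) with hgdef
  have hg_pos : ∀ i, 0 < g i := fun i =>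
    lt_of_lt_of_le (hα i).1 (le_add_of_nonneg_right
      (mul_nonneg (hq i).1.le (by linarith [(hα i).2])))
  have hαg : ∀ i, α i ≤ g i := fun i =>
    le_add_of_nonneg_right (mul_nonneg (hq i).1.le (by linarith [(hα i).2]))
  -- the min collapses to δ
  have hc : (fun i => min (δ i) (δ' i + (1 - 1 / q i) * ω i)) = δ :=
    funext fun i => min_eq_left (hqδ i)
  -- G is diagonal
  have hGdiag : Matrix.diagonal α + Matrix.diagonal q * (1 - Matrix.diagonal α)
      = Matrix.diagonal g := by
    rw [← Matrix.diagonal_one, Matrix.diagonal_sub, Matrix.diagonal_mul_diagonal,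
      Matrix.diagonal_add]
  set Mmat := 1 - Matrix.diagonal δ + Matrix.diagonal g * Matrix.diagonal s * Bp with hMdef
  set Nmat := 1 - Matrix.diagonal δ + Matrix.diagonal α * Matrix.diagonal s * Bp with hNdef
  rw [hc, hGdiag] at hρM
  -- entrywise facts
  have hentry : ∀ (v : Fin n → ℝ) i j,
      (1 - Matrix.diagonal δ + Matrix.diagonal v * Matrix.diagonal s * Bp) i j
        = (if i = j then 1 - δ i else 0) + v i * s i * Bp i j := by
    intro v i j
    rw [Matrix.add_apply, Matrix.sub_apply, Matrix.diagonal_mul_diagonal,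
      Matrix.diagonal_mul, Matrix.one_apply, Matrix.diagonal_apply]
    split <;> ring
  have hN0 : ∀ i j, 0 ≤ Nmat i j := by
    intro i j
    rw [hNdef, hentry]
    have h1 : 0 ≤ α i * s i * Bp i j :=
      mul_nonneg (mul_nonneg (hα i).1.le (hs i).1) (hBp i j)
    split <;> [linarith [(hδ i).2]; linarith]
  have hNM : ∀ i j, Nmat i j ≤ Mmat i j := by
    intro i j
    rw [hNdef, hMdef, hentry, hentry]
    have h1 : α i * s i * Bp i j ≤ g i * s i * Bp i j :=
      mul_le_mul_of_nonneg_right (mul_le_mul_of_nonneg_right (hαg i) (hs i).1) (hBp i j)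
    gcongr <;> simp [h1]
  -- Neumann series facts
  obtain ⟨hmulN, -⟩ := neumann_inv Nmat (entry_summable hn Nmat hρN)
  obtain ⟨hmulM, -⟩ := neumann_inv Mmat (entry_summable hn Mmat hρM)
  set KN := (1 - Nmat)⁻¹ with hKNdef
  set KM := (1 - Mmat)⁻¹ with hKMdef
  have hK := inv_entry_le hn Nmat Mmat hN0 hNM hρN hρM
  have hmulN' : (1 - Nmat) * KN = 1 := by
    rw [hKNdef, (neumann_inv Nmat (entry_summable hn Nmat hρN)).2]
    exact hmulN
  have hmulM' : (1 - Mmat) * KM = 1 := by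
    rw [hKMdef, (neumann_inv Mmat (entry_summable hn Mmat hρM)).2]
    exact hmulM
  -- key identity : D * K - 1 = (V * S * Bp) * K
  have hid : ∀ (V K X : Matrix (Fin n) (Fin n) ℝ),
      (1 - (1 - Matrix.diagonal δ + V * Matrix.diagonal s * Bp)) * K = 1 →
      Matrix.diagonal δ * K - 1 = V * (Matrix.diagonal s * Bp * K) := by
    intro V K X hK1
    calc Matrix.diagonal δ * K - 1
        = Matrix.diagonal δ * K
          - (1 - (1 - Matrix.diagonal δ + V * Matrix.diagonal s * Bp)) * K := by rw [hK1]
      _ = (Matrix.diagonal δ - (1 - (1 - Matrix.diagonal δ + V * Matrix.diagonal s * Bp))) * K := by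
          rw [← Matrix.sub_mul]
      _ = (V * Matrix.diagonal s * Bp) * K := by congr 1; abel
      _ = V * (Matrix.diagonal s * Bp * K) := by
          rw [Matrix.mul_assoc, Matrix.mul_assoc, Matrix.mul_assoc]
  have hidN := hid (Matrix.diagonal α) KN 1 hmulN'
  have hidM := hid (Matrix.diagonal g) KM 1 hmulM'
  -- cancel the diagonal inverses
  have hAinv : (Matrix.diagonal α)⁻¹ * (Matrix.diagonal α * (Matrix.diagonal s * Bp * KN))
      = Matrix.diagonal s * Bp * KN := by
    rw [← Matrix.mul_assoc, diag_inv_cancel α (fun i => (hα i).1.ne'),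
      Matrix.diagonal_mul_diagonal]
    have : (fun i => (α i)⁻¹ * α i) = fun _ => (1:ℝ) := by
      funext i; exact inv_mul_cancel₀ (hα i).1.ne'
    rw [this, Matrix.diagonal_one, Matrix.one_mul]
  have hGinv : (Matrix.diagonal g)⁻¹ * (Matrix.diagonal g * (Matrix.diagonal s * Bp * KM))
      = Matrix.diagonal s * Bp * KM := by
    rw [← Matrix.mul_assoc, diag_inv_cancel g (fun i => (hg_pos i).ne'),
      Matrix.diagonal_mul_diagonal]
    have : (fun i => (g i)⁻¹ * g i) = fun _ => (1:ℝ) := by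
      funext i; exact inv_mul_cancel₀ (hg_pos i).ne'
    rw [this, Matrix.diagonal_one, Matrix.one_mul]
  -- the W (W + D')⁻¹ diagonal
  set w : Fin n → ℝ := fun i => ω i * (ω i + δ' i)⁻¹ with hwdef
  have hW : Matrix.diagonal ω * (Matrix.diagonal ω + Matrix.diagonal δ')⁻¹
      = Matrix.diagonal w := by
    rw [Matrix.diagonal_add, diag_inv_cancel _ (fun i => (hωδ'pos i).ne'),
      Matrix.diagonal_mul_diagonal]
  -- rewrite both sides
  have hLeq : sigmaL α ω δ δ' s x0 y0 B P
      = (fun _ => (1:ℝ)) ⬝ᵥ (Matrix.diagonal s * Bp * KN) *ᵥ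
          (x0 + Matrix.diagonal w *ᵥ y0) := by
    rw [sigmaL, ← hBpdef, ← hNdef, ← hKNdef, hidN, hAinv, hW]
  have hUeq : sigmaU α ω δ δ' s q x0 y0 B P
      = (fun _ => (1:ℝ)) ⬝ᵥ (Matrix.diagonal s * Bp * KM) *ᵥ
          (x0 + Matrix.diagonal q *ᵥ y0) := by
    rw [sigmaU, ← hBpdef, hc, hGdiag, ← hMdef, ← hKMdef, hidM, hGinv]
  rw [hLeq, hUeq]
  -- vectors
  have hwq : ∀ i, 0 ≤ w i ∧ w i ≤ q i := by
    intro i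
    have hq1 := (hq i).1
    have hwd := hωδ'pos i
    constructor
    · exact mul_nonneg (hω i).1 (inv_nonneg.mpr hwd.le)
    · have hexp : (1 - 1 / q i) * ω i = ω i - ω i / q i := by
        field_simp
      have h1 : ω i / q i ≤ ω i + δ' i := by
        have := hqδ i
        rw [hexp] at this
        linarith [(hδ i).1]
      have h2 : ω i ≤ q i * (ω i + δ' i) := by
        rw [div_le_iff₀ hq1] at h1
        linarith [h1]
      rw [hwdef]
      show ω i * (ω i + δ' i)⁻¹ ≤ q i
      rw [← div_eq_mul_inv, div_le_iff₀ hwd]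
      linarith [h2]
  have hv : ∀ j, 0 ≤ (x0 + Matrix.diagonal w *ᵥ y0) j ∧
      (x0 + Matrix.diagonal w *ᵥ y0) j ≤ (x0 + Matrix.diagonal q *ᵥ y0) j := by
    intro j
    rw [Pi.add_apply, Pi.add_apply, Matrix.mulVec_diagonal, Matrix.mulVec_diagonal]
    constructor
    · exact add_nonneg (hx0 j) (mul_nonneg (hwq j).1 (hy0 j))
    · have := mul_le_mul_of_nonneg_right (hwq j).2 (hy0 j)
      linarith
  -- entries of the matrices
  have hXentry : ∀ (K : Matrix (Fin n) (Fin n) ℝ) i j,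
      (Matrix.diagonal s * Bp * K) i j = ∑ l, s i * Bp i l * K l j := by
    intro K i j
    rw [Matrix.mul_apply]
    congr 1
    funext l
    rw [Matrix.diagonal_mul]
  have hX : ∀ i j, 0 ≤ (Matrix.diagonal s * Bp * KN) i j ∧
      (Matrix.diagonal s * Bp * KN) i j ≤ (Matrix.diagonal s * Bp * KM) i j := by
    intro i j
    rw [hXentry, hXentry]
    constructor
    · exact Finset.sum_nonneg fun l _ =>
        mul_nonneg (mul_nonneg (hs i).1 (hBp i l)) (hK l j).1
    · exact Finset.sum_le_sum fun l _ =>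
        mul_le_mul_of_nonneg_left (hK l j).2 (mul_nonneg (hs i).1 (hBp i l))
  -- wrap up
  simp only [dotProduct, Matrix.mulVec, one_mul]
  refine Finset.sum_le_sum fun i _ => ?_
  show (Matrix.diagonal s * Bp * KN) i ⬝ᵥ _ ≤ (Matrix.diagonal s * Bp * KM) i ⬝ᵥ _
  simp only [dotProduct]
  refine Finset.sum_le_sum fun j _ => ?_
  exact mul_le_mul (hX i j).2 (hv j).2 (hv j).1
    (le_trans (hX i j).1 (hX i j).2)
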